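/- Let R = 1/(√5 + 2) = √5 − 2. Then R is the positive root of r² + 4r − 1 = 0, and for all r ∈ [0, R], (2r + r²)/(1−r²) ≤ 1/(1−r²) − 1/2. -/

import Mathlib

open Real Set

theorem F5_parabolic_radius_computation :
    let R : ℝ := Real.sqrt 5 - 2
    R = 1 / (Real.sqrt 5 + 2) ∧ 0 < R ∧ R ^ 2 + 4 * R - 1 = 0 ∧
    ∀ r ∈ Icc (0 : ℝ) R, (2 * r + r ^ 2) / (1 - r ^ 2) ≤ 1 / (1 - r ^ 2) - 1 / 2 := by
  intro R
  have h5 : Real.sqrt 5 ^ 2 = 5 := Real.sq_sqrt (by norm_num)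
  have h2 : (2:ℝ) < Real.sqrt 5 := by nlinarith [Real.sqrt_nonneg 5]
  have h3 : Real.sqrt 5 < 3 := by nlinarith [Real.sqrt_nonneg 5]
  refine ⟨?_, by simp only [R]; linarith, by simp only [R]; nlinarith, ?_⟩
  · show Real.sqrt 5 - 2 = 1 / (Real.sqrt 5 + 2)
    rw [eq_div_iff (by positivity)]
    nlinarith
  · rintro r ⟨hr0, hrR⟩
    have hrR' : r ≤ Real.sqrt 5 - 2 := hrR
    have hr1 : r < 1 := by linarith
    have hd : 0 < 1 - r ^ 2 := by nlinarith
    rw [div_le_iff₀ hd]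
    have expand : (1 / (1 - r ^ 2) - 1 / 2) * (1 - r ^ 2) = 1 - (1 - r ^ 2) / 2 := by
      field_simp
    nlinarith
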